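/- Let $w \subseteq w^*$ be sets, $F \subseteq 2^w$, $F^* \subseteq 2^{w^*}$. If every $f \in F$ extends to some $g \in F^*$ and every $g \in F^*$ restricts into $\mathrm{cl}(F)$ (i.e., $g\restriction w \in \mathrm{cl}(F)$), then the natural map $x_\alpha \mapsto x_\alpha$ ($\alpha \in w$) embeds $\mathbb{B}_{(w,F)}$ as a subalgebra of $\mathbb{B}_{(w^*,F^*)}$. -/

import Mathlib

variable {α : Type*} [BooleanAlgebra α]

/-- Membership in the Boolean subalgebra generated by `X`. -/
inductive BooleanGen (X : Set α) : α → Prop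
  | base {a : α} : a ∈ X → BooleanGen X a
  | bot : BooleanGen X ⊥
  | top : BooleanGen X ⊤
  | sup {a b : α} : BooleanGen X a → BooleanGen X b → BooleanGen X (a ⊔ b)
  | inf {a b : α} : BooleanGen X a → BooleanGen X b → BooleanGen X (a ⊓ b)
  | compl {a : α} : BooleanGen X a → BooleanGen X aᶜ

/-- The Boolean subalgebra generated by `X`, as a set. -/
def genBA (X : Set α) : Set α := {a | BooleanGen X a}

namespace genBA
variable {X : Set α}

instance : Max ↥(genBA X) := ⟨fun a b => ⟨a.1 ⊔ b.1, BooleanGen.sup a.2 b.2⟩⟩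
instance : Min ↥(genBA X) := ⟨fun a b => ⟨a.1 ⊓ b.1, BooleanGen.inf a.2 b.2⟩⟩
instance : Top ↥(genBA X) := ⟨⟨⊤, BooleanGen.top⟩⟩
instance : Bot ↥(genBA X) := ⟨⟨⊥, BooleanGen.bot⟩⟩
instance : Compl ↥(genBA X) := ⟨fun a => ⟨a.1ᶜ, BooleanGen.compl a.2⟩⟩
instance : SDiff ↥(genBA X) := ⟨fun a b => ⟨a.1 ⊓ b.1ᶜ, BooleanGen.inf a.2 (BooleanGen.compl b.2)⟩⟩
instance : HImp ↥(genBA X) := ⟨fun a b => ⟨a.1ᶜ ⊔ b.1, BooleanGen.sup (BooleanGen.compl a.2) b.2⟩⟩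

lemma coe_sdiff (a b : ↥(genBA X)) : ((a \ b : ↥(genBA X)) : α) = (a : α) \ (b : α) := by
  rw [sdiff_eq]; rfl

lemma coe_himp (a b : ↥(genBA X)) : ((a ⇨ b : ↥(genBA X)) : α) = (a : α) ⇨ (b : α) := by
  rw [himp_eq, sup_comm]; rfl

instance : BooleanAlgebra ↥(genBA X) :=
  Subtype.coe_injective.booleanAlgebra _ Iff.rfl Iff.rfl (fun _ _ => rfl) (fun _ _ => rfl) rfl rfl
    (fun _ => rfl) coe_sdiff coe_himp

end genBA

/-- The generator `x_i` of the algebra `B_(w,F)`, realized as a function on `F`. -/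
def xgen {w : Type*} (F : Set (w → Bool)) (i : w) : ↥F → Bool := fun f => f.1 i

/-- The algebra `B_(w,F)` of Definition 0.C, realized concretely as the Boolean
subalgebra of `F → Bool` generated by the evaluation functions `x_i`. -/
abbrev BwF (w : Type*) (F : Set (w → Bool)) : Set (↥F → Bool) :=
  genBA (Set.range (xgen F))

lemma xgen_mem {w : Type*} {F : Set (w → Bool)} (i : w) : xgen F i ∈ BwF w F :=
  BooleanGen.base ⟨i, rfl⟩

/-- The closure `cl(F)` of a family `F ⊆ 2^w`. -/
def clF {w : Type*} (F : Set (w → Bool)) : Set (w → Bool) :=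
  {g | ∀ u : Finset w, ∃ f ∈ F, ∀ x ∈ u, f x = g x}


/-- Proposition 0.D(3): if `w ⊆ w*`, every `f ∈ F` extends to some `g ∈ F*`, and every
`g ∈ F*` restricts into `cl(F)`, then the natural map `x_α ↦ x_α` (for `α ∈ w`) embeds
`B_(w,F)` as a subalgebra of `B_(w*,F*)`. -/
theorem subalgebra_embedding {W : Type*} (w wstar : Set W) (hsub : w ⊆ wstar)
    (F : Set (↥w → Bool)) (Fstar : Set (↥wstar → Bool))
    (hext : ∀ f ∈ F, ∃ g ∈ Fstar, ∀ x : ↥w, g (Set.inclusion hsub x) = f x)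
    (hres : ∀ g ∈ Fstar, (fun x : ↥w => g (Set.inclusion hsub x)) ∈ clF F) :
    ∃ φ : BoundedLatticeHom ↥(BwF ↥w F) ↥(BwF ↥wstar Fstar),
      Function.Injective φ ∧
      ∀ x : ↥w, φ ⟨xgen F x, xgen_mem x⟩ =
        ⟨xgen Fstar (Set.inclusion hsub x), xgen_mem (Set.inclusion hsub x)⟩ := by
  classical
  choose G hG1 hG2 using hext
  let E : ↥F → ↥Fstar := fun f => ⟨G f.1 f.2, hG1 f.1 f.2⟩
  let π : (↥Fstar → Bool) → (↥F → Bool) := fun b f => b (E f)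
  let Xs : Set (↥Fstar → Bool) :=
    Set.range (fun i : ↥w => xgen Fstar (Set.inclusion hsub i))
  have hXs : Xs ⊆ Set.range (xgen Fstar) := by rintro _ ⟨i, rfl⟩; exact ⟨_, rfl⟩
  have mono : ∀ b, BooleanGen Xs b → b ∈ BwF ↥wstar Fstar := by
    intro b hb
    induction hb with
    | base h => exact BooleanGen.base (hXs h)
    | bot => exact BooleanGen.bot
    | top => exact BooleanGen.top
    | sup _ _ ih1 ih2 => exact BooleanGen.sup ih1 ih2
    | inf _ _ ih1 ih2 => exact BooleanGen.inf ih1 ih2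
    | compl _ ih => exact BooleanGen.compl ih
  have supp : ∀ b, BooleanGen Xs b → ∃ u : Finset ↥w,
      ∀ g g' : ↥Fstar,
        (∀ i ∈ u, g.1 (Set.inclusion hsub i) = g'.1 (Set.inclusion hsub i)) →
        b g = b g' := by
    intro b hb
    induction hb with
    | base h =>
        obtain ⟨i, rfl⟩ := h
        exact ⟨{i}, fun g g' h => h i (Finset.mem_singleton_self i)⟩
    | bot => exact ⟨∅, fun _ _ _ => rfl⟩
    | top => exact ⟨∅, fun _ _ _ => rfl⟩
    | sup _ _ ih1 ih2 =>
        obtain ⟨u1, h1⟩ := ih1; obtain ⟨u2, h2⟩ := ih2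
        refine ⟨u1 ∪ u2, fun g g' h => ?_⟩
        show _ ⊔ _ = _ ⊔ _
        rw [h1 g g' (fun i hi => h i (Finset.mem_union_left _ hi)),
            h2 g g' (fun i hi => h i (Finset.mem_union_right _ hi))]
    | inf _ _ ih1 ih2 =>
        obtain ⟨u1, h1⟩ := ih1; obtain ⟨u2, h2⟩ := ih2
        refine ⟨u1 ∪ u2, fun g g' h => ?_⟩
        show _ ⊓ _ = _ ⊓ _
        rw [h1 g g' (fun i hi => h i (Finset.mem_union_left _ hi)),
            h2 g g' (fun i hi => h i (Finset.mem_union_right _ hi))]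
    | compl _ ih =>
        obtain ⟨u1, h1⟩ := ih
        refine ⟨u1, fun g g' h => ?_⟩
        show _ᶜ = _ᶜ
        rw [h1 g g' h]
  have inj : ∀ b b', BooleanGen Xs b → BooleanGen Xs b' → π b = π b' → b = b' := by
    intro b b' hb hb' hπ
    obtain ⟨u, hu⟩ := supp b hb
    obtain ⟨u', hu'⟩ := supp b' hb'
    funext g
    obtain ⟨f, hfF, hf⟩ := hres g.1 g.2 (u ∪ u')
    have hagree : ∀ i ∈ u ∪ u',
        (E ⟨f, hfF⟩).1 (Set.inclusion hsub i) = g.1 (Set.inclusion hsub i) := by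
      intro i hi
      have := hG2 f hfF i
      simp only [E] at *
      rw [this, hf i hi]
    have h1 : b g = b (E ⟨f, hfF⟩) :=
      (hu (E ⟨f, hfF⟩) g (fun i hi => hagree i (Finset.mem_union_left _ hi))).symm
    have h2 : b' (E ⟨f, hfF⟩) = b' g :=
      hu' (E ⟨f, hfF⟩) g (fun i hi => hagree i (Finset.mem_union_right _ hi))
    have h3 : b (E ⟨f, hfF⟩) = b' (E ⟨f, hfF⟩) := congrFun hπ ⟨f, hfF⟩
    rw [h1, h3, h2]
  have surj : ∀ a, BooleanGen (Set.range (xgen F)) a →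
      ∃ b, BooleanGen Xs b ∧ π b = a := by
    intro a ha
    induction ha with
    | base h =>
        obtain ⟨i, rfl⟩ := h
        refine ⟨xgen Fstar (Set.inclusion hsub i), BooleanGen.base ⟨i, rfl⟩, ?_⟩
        funext f
        exact hG2 f.1 f.2 i
    | bot => exact ⟨⊥, BooleanGen.bot, rfl⟩
    | top => exact ⟨⊤, BooleanGen.top, rfl⟩
    | sup _ _ ih1 ih2 =>
        obtain ⟨b1, hb1, e1⟩ := ih1; obtain ⟨b2, hb2, e2⟩ := ih2
        exact ⟨b1 ⊔ b2, BooleanGen.sup hb1 hb2, by rw [← e1, ← e2]; rfl⟩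
    | inf _ _ ih1 ih2 =>
        obtain ⟨b1, hb1, e1⟩ := ih1; obtain ⟨b2, hb2, e2⟩ := ih2
        exact ⟨b1 ⊓ b2, BooleanGen.inf hb1 hb2, by rw [← e1, ← e2]; rfl⟩
    | compl _ ih =>
        obtain ⟨b1, hb1, e1⟩ := ih
        exact ⟨b1ᶜ, BooleanGen.compl hb1, by rw [← e1]; rfl⟩
  choose Ψ hΨgen hΨπ using surj
  let Φ : ↥(BwF ↥w F) → ↥(BwF ↥wstar Fstar) :=
    fun a => ⟨Ψ a.1 a.2, mono _ (hΨgen a.1 a.2)⟩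
  have hΦsup : ∀ a b : ↥(BwF ↥w F), Φ (a ⊔ b) = Φ a ⊔ Φ b := by
    intro a b
    apply Subtype.ext
    apply inj _ _ (hΨgen _ _) (BooleanGen.sup (hΨgen a.1 a.2) (hΨgen b.1 b.2))
    have : π (Ψ a.1 a.2 ⊔ Ψ b.1 b.2) = π (Ψ a.1 a.2) ⊔ π (Ψ b.1 b.2) := rfl
    erw [hΨπ, this, hΨπ, hΨπ]; rfl
  have hΦinf : ∀ a b : ↥(BwF ↥w F), Φ (a ⊓ b) = Φ a ⊓ Φ b := by
    intro a b
    apply Subtype.ext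
    apply inj _ _ (hΨgen _ _) (BooleanGen.inf (hΨgen a.1 a.2) (hΨgen b.1 b.2))
    have : π (Ψ a.1 a.2 ⊓ Ψ b.1 b.2) = π (Ψ a.1 a.2) ⊓ π (Ψ b.1 b.2) := rfl
    erw [hΨπ, this, hΨπ, hΨπ]; rfl
  have hΦtop : Φ ⊤ = ⊤ := by
    apply Subtype.ext
    apply inj _ _ (hΨgen _ _) BooleanGen.top
    erw [hΨπ]; rfl
  have hΦbot : Φ ⊥ = ⊥ := by
    apply Subtype.ext
    apply inj _ _ (hΨgen _ _) BooleanGen.bot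
    erw [hΨπ]; rfl
  refine ⟨⟨⟨⟨Φ, hΦsup⟩, hΦinf⟩, hΦtop, hΦbot⟩, ?_, ?_⟩
  · intro a b hab
    apply Subtype.ext
    have : Ψ a.1 a.2 = Ψ b.1 b.2 := congrArg Subtype.val hab
    have := congrArg π this
    erw [hΨπ, hΨπ] at this; exact this
  · intro x
    apply Subtype.ext
    apply inj _ _ (hΨgen _ _) (BooleanGen.base ⟨x, rfl⟩)
    erw [hΨπ]
    funext f
    exact (hG2 f.1 f.2 x).symm
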